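/- arXiv:2302.06297 — 3 statements merged into one kernel-verified Lean document; each statement's English description precedes it below -/
import Mathlib

section
/- If K_β(β) has closed range, then the reproducing kernel of the subspace H_β = {g ∈ H : g(β) = 0} is K_ξ^β(z) = K_ξ(z) − K_β(z) K_β(β)^† K_ξ(β), where K_β(β)^† is the Moore–Penrose inverse; moreover the orthogonal projection of H onto H_β^⊥ is g ↦ K_β K_β(β)^† g(β), and H_β^⊥ = {K_β u : u ∈ X}. -/
/-- **Reproducing kernel of the subspace `H_β` via the Moore–Penrose inverse.**
Let `H` be an RKHS of `X`-valued entire functions with bounded point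
evaluations `δ_z` and kernel `K_ξ(z) = δ_z δ_ξ^*`, and suppose `K_β(β)` has
closed range with Moore–Penrose inverse `Kd`. Then:
(1) the reproducing kernel of `H_β = {g : g(β) = 0}` is
`K_ξ^β(z) = K_ξ(z) − K_β(z) Kd K_ξ(β)` (here: its kernel functions lie in
`H_β` and reproduce there);
(2) the orthogonal projection of `H` onto `H_β^⊥` is `g ↦ K_β Kd g(β)`;
(3) `H_β^⊥ = {K_β u : u ∈ X}`. -/
theorem subspace_kernel_moore_penrose
    {X H : Type*} [NormedAddCommGroup X] [InnerProductSpace ℂ X] [CompleteSpace X]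
    [TopologicalSpace.SeparableSpace X]
    [NormedAddCommGroup H] [InnerProductSpace ℂ H] [CompleteSpace H]
    (δ : ℂ → H →L[ℂ] X)
    (hent : ∀ f : H, Differentiable ℂ fun z => δ z f)
    (β : ℂ)
    (hclosed : IsClosed
      ((LinearMap.range (((δ β) ∘L (ContinuousLinearMap.adjoint (δ β)) : X →L[ℂ] X) : X →ₗ[ℂ] X) : Submodule ℂ X) : Set X))
    (Kd : X →L[ℂ] X)
    (hmp1 : ((δ β) ∘L (ContinuousLinearMap.adjoint (δ β))) ∘L Kd ∘L
        ((δ β) ∘L (ContinuousLinearMap.adjoint (δ β))) =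
      (δ β) ∘L (ContinuousLinearMap.adjoint (δ β)))
    (hmp2 : Kd ∘L ((δ β) ∘L (ContinuousLinearMap.adjoint (δ β))) ∘L Kd = Kd)
    (hmp3 : IsSelfAdjoint (((δ β) ∘L (ContinuousLinearMap.adjoint (δ β))) ∘L Kd))
    (hmp4 : IsSelfAdjoint (Kd ∘L ((δ β) ∘L (ContinuousLinearMap.adjoint (δ β))))) :
    (∀ (ξ : ℂ) (u : X),
      δ β ((ContinuousLinearMap.adjoint (δ ξ)) u -
          (ContinuousLinearMap.adjoint (δ β)) (Kd (δ β ((ContinuousLinearMap.adjoint (δ ξ)) u)))) = 0 ∧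
      ∀ f : H, δ β f = 0 →
        (inner ℂ f ((ContinuousLinearMap.adjoint (δ ξ)) u -
          (ContinuousLinearMap.adjoint (δ β)) (Kd (δ β ((ContinuousLinearMap.adjoint (δ ξ)) u)))) : ℂ)
          = inner ℂ (δ ξ f) u) ∧
    (∀ g : H,
      g - (ContinuousLinearMap.adjoint (δ β)) (Kd (δ β g)) ∈ LinearMap.ker ((δ β : H →L[ℂ] X) : H →ₗ[ℂ] X) ∧
      (ContinuousLinearMap.adjoint (δ β)) (Kd (δ β g)) ∈ (LinearMap.ker ((δ β : H →L[ℂ] X) : H →ₗ[ℂ] X))ᗮ) ∧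
    ((LinearMap.ker ((δ β : H →L[ℂ] X) : H →ₗ[ℂ] X))ᗮ = LinearMap.range ((ContinuousLinearMap.adjoint (δ β) : X →L[ℂ] H) : X →ₗ[ℂ] H)) := by
  set T := δ β with hT
  set A := T ∘L ContinuousLinearMap.adjoint T with hA
  have hAsa : ContinuousLinearMap.adjoint A = A := by
    rw [hA, ContinuousLinearMap.adjoint_comp, ContinuousLinearMap.adjoint_adjoint]
  -- elements of `ker A` are killed by `T*`
  have hkerTstar : ∀ z : X, A z = 0 → ContinuousLinearMap.adjoint T z = 0 := by
    intro z hz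
    have h1 : (inner ℂ (ContinuousLinearMap.adjoint T z) (ContinuousLinearMap.adjoint T z) : ℂ)
        = inner ℂ z (A z) := by
      rw [ContinuousLinearMap.adjoint_inner_left]
      rfl
    rw [hz] at h1
    simp only [inner_zero_right] at h1
    exact inner_self_eq_zero.mp h1
  -- range T ⊆ range A, hence `A Kd` is the identity on `range T`
  have hrangeA : ∀ h : H, T h ∈ LinearMap.range (A : X →ₗ[ℂ] X) := by
    intro h
    have hcl : (LinearMap.range (A : X →ₗ[ℂ] X)).topologicalClosure = LinearMap.range (A : X →ₗ[ℂ] X) :=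
      hclosed.submodule_topologicalClosure_eq
    have horth : ((LinearMap.range (A : X →ₗ[ℂ] X))ᗮ)ᗮ = LinearMap.range (A : X →ₗ[ℂ] X) := by
      rw [Submodule.orthogonal_orthogonal_eq_closure, hcl]
    rw [← horth, Submodule.mem_orthogonal]
    intro z hz
    rw [Submodule.mem_orthogonal] at hz
    have hAz : (inner ℂ (A z) z : ℂ) = 0 := hz (A z) ⟨z, rfl⟩
    have hTz : ContinuousLinearMap.adjoint T z = 0 := by
      have h1 : (inner ℂ (ContinuousLinearMap.adjoint T z) (ContinuousLinearMap.adjoint T z) : ℂ)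
          = inner ℂ z (A z) := by
        rw [ContinuousLinearMap.adjoint_inner_left]
        rfl
      have h2 : (inner ℂ z (A z) : ℂ) = 0 := by
        have h3 := congrArg (starRingEnd ℂ) hAz
        rwa [inner_conj_symm, map_zero] at h3
      rw [h2] at h1
      exact inner_self_eq_zero.mp h1
    have : (inner ℂ z (T h) : ℂ) = inner ℂ (ContinuousLinearMap.adjoint T z) h := by
      rw [ContinuousLinearMap.adjoint_inner_left]
    rw [this, hTz, inner_zero_left]
  have hAKd : ∀ h : H, A (Kd (T h)) = T h := by
    intro h
    obtain ⟨y, hy⟩ := hrangeA h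
    have := DFunLike.congr_fun hmp1 y
    simp only [ContinuousLinearMap.comp_apply] at this
    rw [ContinuousLinearMap.coe_coe] at hy
    rw [hy] at this
    exact this
  -- the key membership facts
  have part2 : ∀ g : H,
      g - (ContinuousLinearMap.adjoint T) (Kd (T g)) ∈ LinearMap.ker (T : H →ₗ[ℂ] X) ∧
      (ContinuousLinearMap.adjoint T) (Kd (T g)) ∈ (LinearMap.ker (T : H →ₗ[ℂ] X))ᗮ := by
    intro g
    constructor
    · rw [LinearMap.mem_ker]
      rw [map_sub]
      rw [ContinuousLinearMap.coe_coe]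
      have : T ((ContinuousLinearMap.adjoint T) (Kd (T g))) = A (Kd (T g)) := rfl
      rw [this, hAKd, sub_self]
    · rw [Submodule.mem_orthogonal]
      intro f hf
      rw [LinearMap.mem_ker] at hf
      rw [ContinuousLinearMap.coe_coe] at hf
      have : (inner ℂ f ((ContinuousLinearMap.adjoint T) (Kd (T g))) : ℂ)
          = inner ℂ (T f) (Kd (T g)) := ContinuousLinearMap.adjoint_inner_right T f (Kd (T g))
      rw [this, hf, inner_zero_left]
  refine ⟨?_, part2, ?_⟩
  · intro ξ u
    constructor
    · rw [map_sub]
      have : T ((ContinuousLinearMap.adjoint T)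
          (Kd (T ((ContinuousLinearMap.adjoint (δ ξ)) u))))
          = A (Kd (T ((ContinuousLinearMap.adjoint (δ ξ)) u))) := rfl
      rw [this, hAKd, sub_self]
    · intro f hf
      rw [inner_sub_right]
      have h1 : (inner ℂ f ((ContinuousLinearMap.adjoint (δ ξ)) u) : ℂ) = inner ℂ (δ ξ f) u :=
        ContinuousLinearMap.adjoint_inner_right (δ ξ) f u
      have h2 : (inner ℂ f ((ContinuousLinearMap.adjoint T)
          (Kd (T ((ContinuousLinearMap.adjoint (δ ξ)) u)))) : ℂ)
          = inner ℂ (T f) (Kd (T ((ContinuousLinearMap.adjoint (δ ξ)) u))) :=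
        ContinuousLinearMap.adjoint_inner_right T f _
      rw [h1, h2, hf, inner_zero_left, sub_zero]
  · ext f
    constructor
    · intro hf
      have h1 := (part2 f).1
      have h2 := (part2 f).2
      have hmem : f - (ContinuousLinearMap.adjoint T) (Kd (T f)) ∈ (LinearMap.ker (T : H →ₗ[ℂ] X))ᗮ := by
        have := Submodule.sub_mem _ hf h2
        exact this
      have h0 : f - (ContinuousLinearMap.adjoint T) (Kd (T f)) = 0 := by
        have := Submodule.inf_orthogonal_eq_bot (LinearMap.ker (T : H →ₗ[ℂ] X))
        have hmem' : f - (ContinuousLinearMap.adjoint T) (Kd (T f))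
            ∈ (LinearMap.ker (T : H →ₗ[ℂ] X)) ⊓ (LinearMap.ker (T : H →ₗ[ℂ] X))ᗮ := ⟨h1, hmem⟩
        rw [this] at hmem'
        exact hmem'
      have : f = (ContinuousLinearMap.adjoint T) (Kd (T f)) := by
        have := sub_eq_zero.mp h0
        exact this
      exact ⟨Kd (T f), this.symm⟩
    · rintro ⟨u, rfl⟩
      rw [Submodule.mem_orthogonal]
      intro g hg
      rw [LinearMap.mem_ker] at hg
      rw [ContinuousLinearMap.coe_coe] at hg ⊢
      have : (inner ℂ g ((ContinuousLinearMap.adjoint T) u) : ℂ) = inner ℂ (T g) u :=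
        ContinuousLinearMap.adjoint_inner_right T g u
      rw [this, hg, inner_zero_left]
end

section
/- If the backward shift R_β maps H_β into H, then R_β : H_β → H is a bounded operator (by the closed graph theorem), H_β = rng(T − βI) where T is multiplication by the independent variable with domain D = {g ∈ H : Tg ∈ H}, and (T − βI) R_β g = g for every g ∈ H_β. -/
open Filter Topology

/-- **Boundedness of the backward shift and `H_β = rng(T − βI)`.**
Let `H` be an RKHS of `X`-valued entire functions (bounded point evaluations
`δ_z`, realizing `H` injectively as a space of entire functions), and let
`R = R_β` be the generalized backward shift, assumed to map
`H_β = {g : g(β) = 0}` into `H`. Then `R_β : H_β → H` is a bounded operator,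
`H_β = rng(T − βI)` where `T` is multiplication by the independent variable on
its natural domain, and `(T − βI) R_β g = g` for every `g ∈ H_β`. -/
theorem backward_shift_bounded_and_range
    {X H : Type*} [NormedAddCommGroup X] [InnerProductSpace ℂ X] [CompleteSpace X]
    [TopologicalSpace.SeparableSpace X]
    [NormedAddCommGroup H] [InnerProductSpace ℂ H] [CompleteSpace H]
    (δ : ℂ → H →L[ℂ] X)
    (hinj : ∀ f g : H, (∀ z : ℂ, δ z f = δ z g) → f = g)
    (hent : ∀ f : H, Differentiable ℂ fun z => δ z f)
    (β : ℂ)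
    (R : H →ₗ[ℂ] H)
    (hR : ∀ g : H, δ β g = 0 → ∀ z : ℂ, z ≠ β → δ z (R g) = (z - β)⁻¹ • δ z g) :
    (∃ C : ℝ, ∀ g : H, δ β g = 0 → ‖R g‖ ≤ C * ‖g‖) ∧
    (∀ g : H, δ β g = 0 ↔ ∃ h : H, ∀ z : ℂ, δ z g = (z - β) • δ z h) ∧
    (∀ g : H, δ β g = 0 → ∀ z : ℂ, (z - β) • δ z (R g) = δ z g) := by
  -- if two elements agree under δ z for all z ≠ β, they are equal
  have hext : ∀ f g : H, (∀ z : ℂ, z ≠ β → δ z f = δ z g) → f = g := by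
    intro f g hfg
    refine hinj f g ?_
    have hc1 : Continuous fun z => δ z f := (hent f).continuous
    have hc2 : Continuous fun z => δ z g := (hent g).continuous
    have := Continuous.ext_on (dense_compl_singleton β) hc1 hc2
      (fun z hz => hfg z hz)
    exact fun z => congrFun this z
  -- third conjunct
  have h3 : ∀ g : H, δ β g = 0 → ∀ z : ℂ, (z - β) • δ z (R g) = δ z g := by
    intro g hg z
    by_cases hz : z = β
    · subst hz; simp [hg]
    · rw [hR g hg z hz, smul_smul, mul_inv_cancel₀ (sub_ne_zero.2 hz), one_smul]
  refine ⟨?_, ?_, h3⟩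
  · -- boundedness via closed graph theorem
    set K : Submodule ℂ H := LinearMap.ker (δ β : H →ₗ[ℂ] X) with hK
    have hKc : IsClosed (K : Set H) := ContinuousLinearMap.isClosed_ker (δ β)
    haveI : CompleteSpace K := hKc.completeSpace_coe
    set L : K →ₗ[ℂ] H := R.comp K.subtype with hL
    have hmem : ∀ g : K, δ β (g : H) = 0 := fun g => g.2
    have hcont : Continuous L := by
      apply L.continuous_of_seq_closed_graph
      intro u x y hu hLu
      have key : ∀ z : ℂ, z ≠ β → δ z y = δ z (L x) := by
        intro z hz
        have h1 : Tendsto (fun n => δ z (L (u n))) atTop (𝓝 (δ z y)) :=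
          ((δ z).continuous.tendsto y).comp hLu
        have h2 : Tendsto (fun n => δ z ((u n : H))) atTop (𝓝 (δ z (x : H))) :=
          ((δ z).continuous.tendsto _).comp (continuous_subtype_val.tendsto x |>.comp hu)
        have h2' : Tendsto (fun n => (z - β)⁻¹ • δ z ((u n : H))) atTop
            (𝓝 ((z - β)⁻¹ • δ z (x : H))) := h2.const_smul _
        have heq : (fun n => δ z (L (u n))) = fun n => (z - β)⁻¹ • δ z ((u n : H)) := by
          funext n
          exact hR _ (hmem (u n)) z hz
        rw [heq] at h1
        have := tendsto_nhds_unique h1 h2'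
        rw [this, ← hR _ (hmem x) z hz]; rfl
      exact hext y (L x) key
    let Lc : K →L[ℂ] H := ⟨L, hcont⟩
    refine ⟨‖Lc‖, fun g hg => ?_⟩
    have := Lc.le_opNorm ⟨g, hg⟩
    exact this
  · intro g
    constructor
    · intro hg
      exact ⟨R g, fun z => (h3 g hg z).symm⟩
    · rintro ⟨h, hh⟩
      rw [hh β]
      simp
end

section
/- Let β ∈ ℂ₊ with K_β(β), K_{β̄}(β̄) having closed range, and suppose R_β H_β ⊆ H and R_{β̄} H_{β̄} ⊆ H. Then the operator (T − β̄ I) R_β : H_β → H_{β̄} is an isometric isomorphism if and only if the multiplication operator T is symmetric on its domain D. -/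
/-- **`(T − β̄I)R_β` is an isometric isomorphism iff `T` is symmetric.**
Let `H` be a nonzero RKHS of `X`-valued entire functions with bounded point
evaluations `δ_z`, let `β ∈ ℂ₊` with `K_β(β)` and `K_β̄(β̄)` of closed range,
and suppose the backward shifts `R_β, R_β̄` map `H_β, H_β̄` into `H`. Let `S`
act on `H_β` as `(T − β̄I)R_β`, i.e. `(Sg)(z) = ((z − β̄)/(z − β)) g(z)`. Then
`S : H_β → H_β̄` is an isometric isomorphism if and only if the multiplication
operator `T` is symmetric on its domain `D = {g ∈ H : Tg ∈ H}`. -/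
theorem isometric_isomorphism_iff_symmetric
    {X H : Type*} [NormedAddCommGroup X] [InnerProductSpace ℂ X] [CompleteSpace X]
    [TopologicalSpace.SeparableSpace X]
    [NormedAddCommGroup H] [InnerProductSpace ℂ H] [CompleteSpace H] [Nontrivial H]
    (δ : ℂ → H →L[ℂ] X)
    (hinj : ∀ f g : H, (∀ z : ℂ, δ z f = δ z g) → f = g)
    (hent : ∀ f : H, Differentiable ℂ fun z => δ z f)
    (β : ℂ) (hβ : 0 < β.im)
    (hcl1 : IsClosed
      ((LinearMap.range (((δ β) ∘L (ContinuousLinearMap.adjoint (δ β)) : X →L[ℂ] X) : X →ₗ[ℂ] X) : Submodule ℂ X) : Set X))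
    (hcl2 : IsClosed
      ((LinearMap.range (((δ ((starRingEnd ℂ) β)) ∘L
        (ContinuousLinearMap.adjoint (δ ((starRingEnd ℂ) β))) : X →L[ℂ] X) : X →ₗ[ℂ] X) : Submodule ℂ X) : Set X))
    (Rb : H →ₗ[ℂ] H)
    (hRb : ∀ g : H, δ β g = 0 → ∀ z : ℂ, z ≠ β → δ z (Rb g) = (z - β)⁻¹ • δ z g)
    (Rbb : H →ₗ[ℂ] H)
    (hRbb : ∀ g : H, δ ((starRingEnd ℂ) β) g = 0 → ∀ z : ℂ, z ≠ (starRingEnd ℂ) β →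
      δ z (Rbb g) = (z - (starRingEnd ℂ) β)⁻¹ • δ z g)
    (S : H →ₗ[ℂ] H)
    (hS : ∀ g : H, δ β g = 0 → ∀ z : ℂ, z ≠ β →
      δ z (S g) = ((z - (starRingEnd ℂ) β) / (z - β)) • δ z g) :
    ((∀ g : H, δ β g = 0 → δ ((starRingEnd ℂ) β) (S g) = 0 ∧ ‖S g‖ = ‖g‖) ∧
      (∀ h : H, δ ((starRingEnd ℂ) β) h = 0 → ∃ g : H, δ β g = 0 ∧ S g = h)) ↔
    (∀ g h g' h' : H, (∀ z : ℂ, δ z g' = z • δ z g) → (∀ z : ℂ, δ z h' = z • δ z h) →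
      (inner ℂ g' h : ℂ) = inner ℂ g h') := by
  have hneq : (starRingEnd ℂ) β ≠ β := by
    intro h
    have h2 : ((starRingEnd ℂ) β).im = β.im := congrArg Complex.im h
    rw [Complex.conj_im] at h2
    linarith
  have hsub : β - (starRingEnd ℂ) β ≠ 0 := sub_ne_zero.mpr (Ne.symm hneq)
  -- extension lemma: equality off {β, β̄} implies equality
  have hext : ∀ f g : H,
      (∀ z : ℂ, z ≠ β → z ≠ (starRingEnd ℂ) β → δ z f = δ z g) → f = g := by
    intro f g hfg
    have hdense : Dense (({β, (starRingEnd ℂ) β} : Set ℂ)ᶜ) :=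
      (((Set.finite_singleton ((starRingEnd ℂ) β)).insert β).countable).dense_compl ℂ
    have heq : (fun z => δ z f) = fun z => δ z g :=
      Continuous.ext_on hdense (hent f).continuous (hent g).continuous
        (fun z hz => by
          simp only [Set.mem_compl_iff, Set.mem_insert_iff, Set.mem_singleton_iff, not_or] at hz
          exact hfg z hz.1 hz.2)
    exact hinj f g fun z => congrFun heq z
  constructor
  · rintro ⟨hiso, -⟩ g h g' h' hg hh
    -- the diagonal case
    have diag : ∀ u u' : H, (∀ z : ℂ, δ z u' = z • δ z u) →
        (inner ℂ u' u : ℂ) = inner ℂ u u' := by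
      intro u u' hu
      have hf0 : δ β (u' - β • u) = 0 := by
        simp [map_sub, map_smul, hu β, sub_self]
      have hSf : S (u' - β • u) = u' - ((starRingEnd ℂ) β) • u := by
        apply hext
        intro z hz1 hz2
        rw [hS _ hf0 z hz1]
        simp only [map_sub, map_smul, hu z]
        match_scalars
        simp only [mul_one]
        exact div_mul_cancel₀ _ (sub_ne_zero.mpr hz1)
      have hn := (hiso _ hf0).2
      rw [hSf] at hn
      have hsq : (inner ℂ (u' - ((starRingEnd ℂ) β) • u) (u' - ((starRingEnd ℂ) β) • u) : ℂ)
          = inner ℂ (u' - β • u) (u' - β • u) := by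
        rw [inner_self_eq_norm_sq_to_K, inner_self_eq_norm_sq_to_K, hn]
      simp only [inner_sub_left, inner_sub_right, inner_smul_left, inner_smul_right,
        Complex.conj_conj] at hsq
      have h2 : (β - (starRingEnd ℂ) β) * (inner ℂ u' u : ℂ)
          = (β - (starRingEnd ℂ) β) * (inner ℂ u u' : ℂ) := by
        linear_combination hsq
      exact mul_left_cancel₀ hsub h2
    have d1 := diag (g + h) (g' + h') (fun z => by
      rw [map_add, map_add, hg z, hh z, smul_add])
    have d2 := diag (g + Complex.I • h) (g' + Complex.I • h') (fun z => by
      rw [map_add, map_add, map_smul, map_smul, hg z, hh z]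
      module)
    have d3 := diag g g' hg
    have d4 := diag h h' hh
    simp only [inner_add_left, inner_add_right, inner_smul_left, inner_smul_right,
      Complex.conj_I] at d1 d2
    have e2 : Complex.I * ((inner ℂ g' h : ℂ) - inner ℂ h' g)
        = Complex.I * ((inner ℂ g h' : ℂ) - inner ℂ h g') := by
      linear_combination d2 - d3 - d4 + ((inner ℂ h' h : ℂ) - inner ℂ h h') * Complex.I_sq
    have e2' : (inner ℂ g' h : ℂ) - inner ℂ h' g = (inner ℂ g h' : ℂ) - inner ℂ h g' :=
      mul_left_cancel₀ Complex.I_ne_zero e2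
    linear_combination (d1 - d3 - d4 + e2') / 2
  · intro hsym
    constructor
    · intro g hg
      constructor
      · rw [hS g hg _ hneq]
        simp
      · set u := Rb g with hu_def
        have hu : ∀ z : ℂ, δ z g = (z - β) • δ z u := by
          intro z
          by_cases hz : z = β
          · subst hz; simp [hg]
          · rw [hRb g hg z hz, smul_smul, mul_inv_cancel₀ (sub_ne_zero.mpr hz), one_smul]
        have hu' : ∀ z : ℂ, δ z (g + β • u) = z • δ z u := by
          intro z
          rw [map_add, map_smul, hu z]
          module
        have hdiag := hsym u u (g + β • u) (g + β • u) hu' hu'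
        have hSg : S g = g + (β - (starRingEnd ℂ) β) • u := by
          apply hext
          intro z hz1 hz2
          rw [hS g hg z hz1, map_add, map_smul, hRb g hg z hz1]
          match_scalars
          field_simp [sub_ne_zero.mpr hz1]
          ring
        rw [hSg]
        have hip : (inner ℂ (g + (β - (starRingEnd ℂ) β) • u)
            (g + (β - (starRingEnd ℂ) β) • u) : ℂ) = inner ℂ g g := by
          simp only [inner_add_left, inner_add_right, inner_smul_left, inner_smul_right,
            map_sub, Complex.conj_conj] at hdiag ⊢
          linear_combination (β - (starRingEnd ℂ) β) * hdiag
        have h3 : ‖g + (β - (starRingEnd ℂ) β) • u‖^2 = ‖g‖^2 := by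
          rw [← @inner_self_eq_norm_sq ℂ, ← @inner_self_eq_norm_sq ℂ, hip]
        have h4 := (sq_eq_sq_iff_abs_eq_abs _ _).mp h3
        rwa [abs_of_nonneg (norm_nonneg _), abs_of_nonneg (norm_nonneg _)] at h4
    · intro h hh
      set g := h + ((starRingEnd ℂ) β - β) • Rbb h with hg_def
      have hR : ∀ z : ℂ, z ≠ (starRingEnd ℂ) β →
          δ z g = ((z - β)/(z - (starRingEnd ℂ) β)) • δ z h := by
        intro z hz
        rw [hg_def, map_add, map_smul, hRbb h hh z hz]
        match_scalars
        field_simp [sub_ne_zero.mpr hz]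
        ring
      have hg0 : δ β g = 0 := by
        rw [hR β (Ne.symm hneq)]
        simp
      refine ⟨g, hg0, ?_⟩
      apply hext
      intro z hz1 hz2
      rw [hS g hg0 z hz1, hR z hz2, smul_smul]
      have hone : ((z - (starRingEnd ℂ) β)/(z - β)) * ((z - β)/(z - (starRingEnd ℂ) β)) = 1 := by
        have h1 : z - β ≠ 0 := sub_ne_zero.mpr hz1
        have h2 : z - (starRingEnd ℂ) β ≠ 0 := sub_ne_zero.mpr hz2
        field_simp
      rw [hone, one_smul]
end
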